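/- For every even positive integer n and every integer i with 0 ≤ i ≤ n, the number K(i,n) = Σ_{j=0}^{i} (-1)^j · C(i,j) · C(n-i, n/2 - j) satisfies: K(i,n) = 0 if i is odd; K(i,n) < 0 if i ≡ 2 (mod 4); and K(i,n) > 0 if i ≡ 0 (mod 4). -/
import Mathlib
open Polynomial Finset

/-- Krawtchouk value K(i,n) = Σ_{j=0}^{i} (-1)^j C(i,j) C(n-i, n/2-j),
with the convention that C(a,b) = 0 when b < 0. -/
def K (i n : ℕ) : ℤ :=
  ∑ j ∈ Finset.range (i + 1),
    if j ≤ n / 2 then (-1 : ℤ) ^ j * (i.choose j) * ((n - i).choose (n / 2 - j)) else 0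

namespace Kraw

lemma coeff_one_sub_X_pow (i j : ℕ) :
    ((1 - X : ℤ[X])^i).coeff j = (-1)^j * i.choose j := by
  have h : (1 - X : ℤ[X]) = C (-1) * (X + C (-1)) := by
    simp [C_neg]; ring
  rw [h, mul_pow, ← C_pow, coeff_C_mul, coeff_X_add_C_pow]
  rcases le_or_gt j i with hj | hj
  · have h2 : (-1:ℤ)^i * (-1)^(i-j) = (-1)^j := by
      rw [← pow_add, show i+(i-j) = 2*(i-j)+j from by omega, pow_add, pow_mul]
      simp
    rw [← mul_assoc, h2]
  · simp [Nat.choose_eq_zero_of_lt hj]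

/-- The polynomial (1-X)^i (1+X)^(2m-i). -/
noncomputable def P (m i : ℕ) : ℤ[X] := (1 - X)^i * (1 + X)^(2*m - i)

lemma one_sub_X_ne : (1 - X : ℤ[X]) ≠ 0 := by
  intro h
  have h2 : ((1:ℤ[X]) - X).coeff 1 = -1 := by simp [coeff_one]
  rw [h] at h2
  simp at h2

lemma one_add_X_ne : (1 + X : ℤ[X]) ≠ 0 := by
  intro h
  have h2 : ((1:ℤ[X]) + X).coeff 1 = 1 := by simp [coeff_one]
  rw [h] at h2
  simp at h2

lemma natDegree_P (m i : ℕ) (hi : i ≤ 2*m) : (P m i).natDegree = 2*m := by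
  rw [P, natDegree_mul (pow_ne_zero _ one_sub_X_ne) (pow_ne_zero _ one_add_X_ne),
    natDegree_pow, natDegree_pow]
  have h1 : (1 - X : ℤ[X]).natDegree = 1 := by
    rw [show (1 - X : ℤ[X]) = -(X - C 1) by simp [C_1], natDegree_neg, natDegree_X_sub_C]
  have h2 : (1 + X : ℤ[X]).natDegree = 1 := by
    rw [show (1 + X : ℤ[X]) = X + C 1 by simp [C_1, add_comm], natDegree_X_add_C]
  rw [h1, h2]; omega

lemma reverse_one : (1 : ℤ[X]).reverse = 1 := by
  rw [← C_1, reverse_C]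

lemma reverse_X' : (X : ℤ[X]).reverse = 1 := by
  rw [show (X : ℤ[X]) = X * 1 by ring, reverse_X_mul, reverse_one]

lemma reverse_one_add_X : (1 + X : ℤ[X]).reverse = 1 + X := by
  rw [show (1 + X : ℤ[X]) = C 1 + X by simp, reverse_C_add, reverse_X', natDegree_X, pow_one]
  simp [add_comm]

lemma reverse_one_sub_X : (1 - X : ℤ[X]).reverse = -(1 - X) := by
  rw [show (1 - X : ℤ[X]) = C 1 + (-X) by simp [C_1, sub_eq_add_neg], reverse_C_add,
    reverse_neg, reverse_X']
  rw [natDegree_neg, natDegree_X, pow_one]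
  simp [C_1]

lemma reverse_one_add_X_pow (d : ℕ) : ((1 + X : ℤ[X])^d).reverse = (1 + X)^d := by
  induction d with
  | zero => simpa using reverse_one
  | succ d ih =>
    rw [pow_succ, reverse_mul_of_domain, ih, reverse_one_add_X]

lemma reverse_one_sub_X_pow (d : ℕ) : ((1 - X : ℤ[X])^d).reverse = (-1)^d * (1 - X)^d := by
  induction d with
  | zero => simpa using reverse_one
  | succ d ih =>
    rw [pow_succ, reverse_mul_of_domain, ih, reverse_one_sub_X, pow_succ]
    ring

lemma reverse_P (m i : ℕ) : (P m i).reverse = (-1)^i * P m i := by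
  rw [P, reverse_mul_of_domain, reverse_one_sub_X_pow, reverse_one_add_X_pow]
  ring

/-- palindromy -/
lemma coeff_P_palin (m i k : ℕ) (hi : i ≤ 2*m) (hk : k ≤ 2*m) :
    (P m i).coeff (2*m - k) = (-1)^i * (P m i).coeff k := by
  have h := coeff_reverse (P m i) k
  rw [reverse_P, natDegree_P m i hi, revAt_le hk] at h
  rw [← h, show ((-1:ℤ[X])^i) = C ((-1)^i) by simp, coeff_C_mul]

lemma c_odd (m i : ℕ) (hodd : Odd i) (hi : i ≤ 2*m) : (P m i).coeff m = 0 := by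
  have h := coeff_P_palin m i m hi (by omega)
  rw [show 2*m - m = m from by omega, hodd.neg_one_pow] at h
  omega

lemma c_even_symm (m i : ℕ) (heven : Even i) (hi : i ≤ 2*m) (hm : 1 ≤ m) :
    (P m i).coeff (m+1) = (P m i).coeff (m-1) := by
  have h := coeff_P_palin m i (m-1) hi (by omega)
  rw [show 2*m - (m-1) = m+1 from by omega, heven.neg_one_pow, one_mul] at h
  exact h

/-- collapse helper -/
lemma collapse (p : ℤ[X]) (d : ℕ) : (C (d:ℤ)) * p^(d-1) * p = C (d:ℤ) * p^d := by
  cases d with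
  | zero => simp
  | succ d => rw [show d+1-1 = d from rfl, mul_assoc, ← pow_succ]

/-- the differential equation -/
lemma deriv_eq (m i : ℕ) (hi : i ≤ 2*m) :
    (1 - X^2) * derivative (P m i)
      = (C ((2*m:ℤ) - 2*i) - C ((2*m:ℤ)) * X) * P m i := by
  rw [P, derivative_mul, derivative_pow, derivative_pow]
  rw [show derivative (1 - X : ℤ[X]) = -1 by simp]
  rw [show derivative (1 + X : ℤ[X]) = 1 by simp]
  rw [show (1 - X^2 : ℤ[X]) = (1 - X) * (1 + X) by ring]
  have hcast : ((2*m - i : ℕ) : ℤ) = 2*m - i := by omega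
  have expand : ((1-X) * (1+X)) * ((C (i:ℤ) * (1-X)^(i-1) * (-1)) * (1+X)^(2*m-i)
        + (1-X)^i * (C ((2*m-i:ℕ):ℤ) * (1+X)^(2*m-i-1) * 1))
      = (C (i:ℤ) * (1-X)^(i-1) * (1-X)) * (-(1+X)^(2*m-i) * (1+X))
        + (C ((2*m-i:ℕ):ℤ) * (1+X)^(2*m-i-1) * (1+X)) * ((1-X)^i * (1-X)) := by
    ring
  rw [expand, collapse (1 - X : ℤ[X]) i, collapse (1 + X : ℤ[X]) (2*m-i), hcast]
  simp only [map_sub, map_mul, map_ofNat, map_natCast, map_one]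
  ring


/-- coefficient version of the differential equation -/
lemma F2 (m i : ℕ) (hm : 1 ≤ m) (hi : i ≤ 2*m) :
    ((m:ℤ)+1) * (P m i).coeff (m+1) - ((m:ℤ)-1) * (P m i).coeff (m-1)
      = ((2*m:ℤ) - 2*i) * (P m i).coeff m - (2*m:ℤ) * (P m i).coeff (m-1) := by
  obtain ⟨m', rfl⟩ : ∃ m', m = m'+1 := ⟨m-1, by omega⟩
  have h := congrArg (fun p => p.coeff (m'+1)) (deriv_eq (m'+1) i hi)
  simp only [sub_mul, one_mul, coeff_sub] at h
  rw [show (X^2 * derivative (P (m'+1) i)) = derivative (P (m'+1) i) * X^2 from mul_comm _ _,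
    coeff_mul_X_pow', coeff_derivative, mul_assoc,
    coeff_C_mul, coeff_C_mul, coeff_X_mul] at h
  rcases Nat.eq_zero_or_pos m' with rfl | hpos
  · norm_num at h ⊢
    linarith [h]
  · rw [if_pos (by omega : 2 ≤ m'+1)] at h
    rw [show m'+1-2 = m'-1 from by omega, coeff_derivative] at h
    rw [show m'+1-1 = m' from by omega]
    rw [show m'-1+1 = m' from by omega] at h
    push_cast at h ⊢
    rw [show ((m'-1:ℕ):ℤ) = (m':ℤ)-1 from by omega] at h
    linarith [h]

/-- (m+1) c_{m-1}(i) = (m-i) c_m(i) for even i -/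
lemma G1 (m i : ℕ) (hm : 1 ≤ m) (heven : Even i) (hi : i ≤ 2*m) :
    ((m:ℤ)+1) * (P m i).coeff (m-1) = ((m:ℤ) - i) * (P m i).coeff m := by
  have h := F2 m i hm hi
  rw [c_even_symm m i heven hi hm] at h
  have h2 : 2 * (((m:ℤ)+1) * (P m i).coeff (m-1)) = 2 * (((m:ℤ) - i) * (P m i).coeff m) := by
    linear_combination h
  exact mul_left_cancel₀ (by norm_num : (2:ℤ) ≠ 0) h2

/-- step relation from (1+X) P(i+1) = (1-X) P(i) -/
lemma F3 (m i : ℕ) (hm : 1 ≤ m) (hi : i < 2*m) :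
    (P m (i+1)).coeff m + (P m (i+1)).coeff (m-1)
      = (P m i).coeff m - (P m i).coeff (m-1) := by
  have hp : (1+X) * P m (i+1) = (1-X) * P m i := by
    rw [P, P]
    have e1 : (1-X:ℤ[X])^(i+1) = (1-X)^i * (1-X) := pow_succ _ _
    have e2 : (1+X:ℤ[X])^(2*m-i) = (1+X)^(2*m-(i+1)) * (1+X) := by
      rw [← pow_succ]; congr 1; omega
    rw [e1, e2]; ring
  obtain ⟨m', rfl⟩ : ∃ m', m = m'+1 := ⟨m-1, by omega⟩
  have h := congrArg (fun p => p.coeff (m'+1)) hp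
  simp only [add_mul, sub_mul, one_mul, coeff_add, coeff_sub, coeff_X_mul] at h
  rw [show m'+1-1 = m' from by omega]
  linarith [h]

/-- the two-step recurrence -/
lemma G3 (m i : ℕ) (hm : 1 ≤ m) (heven : Even i) (hi : i + 2 ≤ 2*m) :
    ((2*m:ℤ) - i - 1) * (P m (i+2)).coeff m = -((i:ℤ)+1) * (P m i).coeff m := by
  have hodd1 : (P m (i+1)).coeff m = 0 :=
    c_odd m (i+1) (heven.add_one) (by omega)
  -- G2: (m+1) c_{m-1}(i+1) = (i+1) c_m(i)
  have hF3 := F3 m i hm (by omega)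
  have hG1 := G1 m i hm heven (by omega)
  have hG2 : ((m:ℤ)+1) * (P m (i+1)).coeff (m-1) = ((i:ℤ)+1) * (P m i).coeff m := by
    linear_combination ((m:ℤ)+1) * hF3 - hG1 - ((m:ℤ)+1) * hodd1
  have hF3' := F3 m (i+1) hm (by omega)
  have hG1' := G1 m (i+2) hm (by simpa using heven.add (by decide : Even 2)) (by omega)
  rw [show i+1+1 = i+2 from rfl] at hF3'
  push_cast at hG1' ⊢
  linear_combination ((m:ℤ)+1) * hF3' - hG1' - hG2 + ((m:ℤ)+1) * hodd1

/-- K equals the middle coefficient -/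
lemma K_eq_coeff (m i : ℕ) (hi : i ≤ 2*m) : K i (2*m) = (P m i).coeff m := by
  have hdiv : 2*m/2 = m := by omega
  have hc : (P m i).coeff m
      = ∑ j ∈ Finset.range (m+1), (-1:ℤ)^j * (i.choose j) * ((2*m-i).choose (m-j)) := by
    rw [P, coeff_mul, Finset.Nat.sum_antidiagonal_eq_sum_range_succ_mk]
    refine Finset.sum_congr rfl fun j hj => ?_
    rw [coeff_one_sub_X_pow, coeff_one_add_X_pow]
  rw [K, hdiv, hc]
  set f : ℕ → ℤ := fun j => (-1:ℤ)^j * (i.choose j) * ((2*m-i).choose (m-j)) with hf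
  have hL : ∑ j ∈ Finset.range (i+1), (if j ≤ m then f j else 0)
      = ∑ j ∈ Finset.range (i+m+1), (if j ≤ m then f j else 0) := by
    refine Finset.sum_subset (Finset.range_subset_range.mpr (by omega)) fun j hj hj2 => ?_
    have hji : i < j := by
      simp only [Finset.mem_range] at hj2; omega
    simp [hf, Nat.choose_eq_zero_of_lt hji]
  have hR : ∑ j ∈ Finset.range (m+1), f j
      = ∑ j ∈ Finset.range (i+m+1), (if j ≤ m then f j else 0) := by
    rw [show ∑ j ∈ Finset.range (m+1), f j
        = ∑ j ∈ Finset.range (m+1), (if j ≤ m then f j else 0) from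
      Finset.sum_congr rfl fun j hj => by
        rw [if_pos (by simp only [Finset.mem_range] at hj; omega)]]
    refine Finset.sum_subset (Finset.range_subset_range.mpr (by omega)) fun j hj hj2 => ?_
    rw [if_neg (by simp only [Finset.mem_range] at hj2; omega)]
  rw [hL, ← hR]

/-- sign by induction -/
lemma sign_c (m : ℕ) (hm : 1 ≤ m) : ∀ t, 2*t ≤ 2*m → 0 < (-1:ℤ)^t * (P m (2*t)).coeff m := by
  intro t
  induction t with
  | zero =>
    intro _
    have : (P m 0).coeff m = ((2*m).choose m : ℤ) := by
      rw [P]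
      simp [coeff_one_add_X_pow]
    rw [this]
    simp only [pow_zero, one_mul]
    exact_mod_cast Nat.choose_pos (by omega)
  | succ t ih =>
    intro h
    have h1 := ih (by omega)
    have h3 := G3 m (2*t) hm (even_two_mul t) (by omega)
    have ha : (0:ℤ) < (2*m:ℤ) - 2*t - 1 := by
      have : 2*t + 2 ≤ 2*m := by omega
      push_cast
      omega
    have key : ((2*m:ℤ) - 2*t - 1) * ((-1:ℤ)^(t+1) * (P m (2*t+2)).coeff m)
        = ((2*t:ℤ)+1) * ((-1:ℤ)^t * (P m (2*t)).coeff m) := by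
      rw [pow_succ]
      push_cast at h3
      linear_combination (-(-1:ℤ)^t) * h3
    have hrhs : (0:ℤ) < ((2*t:ℤ)+1) * ((-1:ℤ)^t * (P m (2*t)).coeff m) :=
      mul_pos (by positivity) h1
    rw [← key] at hrhs
    rw [show 2*(t+1) = 2*t+2 from by ring]
    nlinarith [hrhs, ha]

end Kraw

theorem krawtchouk_sign (n i : ℕ) (hn : Even n) (hpos : 0 < n) (hi : i ≤ n) :
    (Odd i → K i n = 0) ∧
    (i % 4 = 2 → K i n < 0) ∧
    (i % 4 = 0 → 0 < K i n) := by
  obtain ⟨r, rfl⟩ := hn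
  have hrr : r + r = 2*r := by omega
  have hm : 1 ≤ r := by omega
  rw [hrr] at hi ⊢
  have hK := Kraw.K_eq_coeff r i hi
  refine ⟨fun hodd => ?_, fun h4 => ?_, fun h4 => ?_⟩
  · rw [hK]
    exact Kraw.c_odd r i hodd hi
  · obtain ⟨t, rfl⟩ : ∃ t, i = 2*t := ⟨i/2, by omega⟩
    have ht : Odd t := by
      rw [Nat.odd_iff]; omega
    have hs := Kraw.sign_c r hm t hi
    rw [ht.neg_one_pow] at hs
    rw [hK]
    linarith [hs]
  · obtain ⟨t, rfl⟩ : ∃ t, i = 2*t := ⟨i/2, by omega⟩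
    have ht : Even t := by
      rw [Nat.even_iff]; omega
    have hs := Kraw.sign_c r hm t hi
    rw [ht.neg_one_pow] at hs
    rw [hK]
    linarith [hs]
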